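/- In the setting of the disintegration over a Borel cross section, assume in addition that G is unimodular, and let H be a group acting measurably on Z, preserving the measure m, and commuting with the G-action. Then the induced H-action on the cross section X̂, given by h·x := r(h·x) (the representative in X̂ of the orbit of h·x), preserves the measure ν, i.e. for every h ∈ H the pushforward of ν under x ↦ r(h·x) equals ν. -/

import Mathlib

open MeasureTheory Pointwise

/-- If `G` is unimodular and a group `H` acts measurably on `Z`, preserving `m` and
commuting with the `G`-action, then the induced `H`-action `x ↦ r(h • x)` on the
cross section preserves the canonical disintegration measure `ν`. -/
theorem disintegration_measure_invariant_of_commuting_action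
    {G Z : Type*} [Group G] [TopologicalSpace G] [IsTopologicalGroup G]
    [LocallyCompactSpace G] [SecondCountableTopology G]
    [MeasurableSpace G] [BorelSpace G]
    (lam : Measure G) [lam.IsHaarMeasure] [lam.IsMulRightInvariant]
    [MeasurableSpace Z] [StandardBorelSpace Z]
    [MulAction G Z] (hact : Measurable fun p : G × Z => p.1 • p.2)
    (m : Measure Z) [SigmaFinite m]
    (hinv : ∀ g : G, Measure.map (fun z : Z => g • z) m = m)
    (hstab : ∀ z : Z, IsCompact {g : G | g • z = z})
    (Xh : Set Z) (hXh : MeasurableSet Xh)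
    (hcross : ∀ z : Z, ∃! x : Z, x ∈ Xh ∧ x ∈ MulAction.orbit G z)
    (r : Z → Z) (hr_meas : Measurable r)
    (hr : ∀ z : Z, r z ∈ Xh ∧ r z ∈ MulAction.orbit G z)
    (V : Set G) (hV_cpt : IsCompact V) (hV_nhd : V ∈ nhds (1 : G))
    (hsf : ∃ E : ℕ → Set Z, (∀ n, MeasurableSet (E n) ∧ m (V • E n) < ⊤) ∧ Xh ⊆ ⋃ n, E n)
    -- `ν` is the canonical measure on the cross section disintegrating `m`
    (ν : Measure Z) (hν_conc : ν Xhᶜ = 0) (hν_sf : SigmaFinite ν)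
    (hν_disint : ∀ f : Z → ENNReal, Measurable f →
      ∫⁻ z, f z ∂m = ∫⁻ x, ∫⁻ g, f (g • x) ∂lam ∂ν)
    -- `H` acts measurably on `Z`, preserving `m` and commuting with the `G`-action
    {H : Type*} [Group H] [MulAction H Z]
    (hH_meas : ∀ h : H, Measurable fun z : Z => h • z)
    (hH_inv : ∀ h : H, Measure.map (fun z : Z => h • z) m = m)
    (hcomm : ∀ (g : G) (h : H) (z : Z), h • (g • z) = g • (h • z)) :
    ∀ h : H, Measure.map (fun x : Z => r (h • x)) ν = ν := by
  intro h
  haveI : SigmaFinite lam := by infer_instance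
  set φ : Z → Z := fun x => r (h • x) with hφ_def
  have hφ_meas : Measurable φ := hr_meas.comp (hH_meas h)
  set ν' : Measure Z := Measure.map φ ν with hν'_def
  -- `r` sends every point of the orbit of `x ∈ Xh` back to `x`
  have hr_fix : ∀ x ∈ Xh, ∀ g : G, r (g • x) = x := by
    intro x hx g
    obtain ⟨y, _, huniq⟩ := hcross x
    have h1 : r (g • x) ∈ Xh ∧ r (g • x) ∈ MulAction.orbit G x := by
      refine ⟨(hr _).1, ?_⟩
      have := (hr (g • x)).2
      rwa [MulAction.orbit_smul] at this
    have h2 : x ∈ Xh ∧ x ∈ MulAction.orbit G x := ⟨hx, MulAction.mem_orbit_self x⟩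
    rw [huniq _ h1, huniq _ h2]
  -- measurability of the fiberwise integral
  have mff : ∀ f : Z → ENNReal, Measurable f →
      Measurable fun y : Z => ∫⁻ g, f (g • y) ∂lam := by
    intro f hf
    exact Measurable.lintegral_prod_right' (f := fun p : Z × G => f (p.2 • p.1))
      (hf.comp (hact.comp measurable_swap))
  -- G-invariance of the fiberwise integral (uses unimodularity)
  have hF_inv : ∀ (f : Z → ENNReal) (g₀ : G) (y : Z),
      ∫⁻ g, f (g • g₀ • y) ∂lam = ∫⁻ g, f (g • y) ∂lam := by
    intro f g₀ y
    have := lintegral_mul_right_eq_self (μ := lam) (fun g => f (g • y)) g₀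
    simpa [mul_smul] using this
  -- ν' is concentrated on Xh
  have hν'_conc : ν' Xhᶜ = 0 := by
    rw [hν'_def, Measure.map_apply hφ_meas hXh.compl]
    have : φ ⁻¹' Xhᶜ = ∅ := by
      ext x
      simp only [Set.mem_preimage, Set.mem_compl_iff, Set.mem_empty_iff_false, iff_false,
        not_not]
      exact (hr (h • x)).1
    rw [this, measure_empty]
  -- ν' satisfies the same disintegration identity
  have hν'_disint : ∀ f : Z → ENNReal, Measurable f →
      ∫⁻ z, f z ∂m = ∫⁻ x, ∫⁻ g, f (g • x) ∂lam ∂ν' := by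
    intro f hf
    rw [hν'_def, lintegral_map (mff f hf) hφ_meas]
    have step1 : ∀ x : Z, ∫⁻ g, f (g • φ x) ∂lam = ∫⁻ g, f (g • (h • x)) ∂lam := by
      intro x
      obtain ⟨g₀, hg₀⟩ := (hr (h • x)).2
      have : φ x = g₀ • (h • x) := hg₀.symm
      rw [this]
      exact hF_inv f g₀ (h • x)
    simp only [step1]
    have e1 : ∫⁻ z, f (h • z) ∂m = ∫⁻ x, ∫⁻ g, f (g • (h • x)) ∂lam ∂ν := by
      have := hν_disint (fun z => f (h • z)) (hf.comp (hH_meas h))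
      simpa only [hcomm] using this
    have e2 : ∫⁻ z, f (h • z) ∂m = ∫⁻ z, f z ∂m := by
      conv_rhs => rw [← hH_inv h]
      rw [lintegral_map hf (hH_meas h)]
    rw [← e2, e1]
  -- Uniqueness part
  obtain ⟨E, hE, hEcover⟩ := hsf
  set B : ℕ → Set Z := fun n => toMeasurable m (V • E n) with hB_def
  have hB_meas : ∀ n, MeasurableSet (B n) := fun n => measurableSet_toMeasurable m _
  have hB_fin : ∀ n, m (B n) < ⊤ := by
    intro n
    rw [hB_def]
    simpa [measure_toMeasurable] using (hE n).2
  have hVB : ∀ n, V • E n ⊆ B n := fun n => subset_toMeasurable m _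
  set W : ℕ → Z → ENNReal := fun n x => ∫⁻ g, (B n).indicator 1 (g • x) ∂lam with hW_def
  have hW_meas : ∀ n, Measurable (W n) :=
    fun n => mff _ (measurable_one.indicator (hB_meas n))
  -- the key identity : set integrals of W n agree for any measure with the two properties
  have key : ∀ (ν₂ : Measure Z), ν₂ Xhᶜ = 0 →
      (∀ f : Z → ENNReal, Measurable f →
        ∫⁻ z, f z ∂m = ∫⁻ x, ∫⁻ g, f (g • x) ∂lam ∂ν₂) →
      ∀ (n : ℕ) (A : Set Z), MeasurableSet A →
      ∫⁻ x in A, W n x ∂ν₂ = ∫⁻ z, (A.indicator 1 (r z)) * ((B n).indicator 1 z) ∂m := by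
    intro ν₂ hconc hdis n A hA
    have hf_meas : Measurable fun z => (A.indicator (1 : Z → ENNReal) (r z)) * ((B n).indicator 1 z) :=
      Measurable.mul (((measurable_one : Measurable (1 : Z → ENNReal)).indicator hA).comp hr_meas) ((measurable_one : Measurable (1 : Z → ENNReal)).indicator (hB_meas n))
    rw [hdis _ hf_meas]
    have hae : ∀ᵐ x ∂ν₂, x ∈ Xh := by
      rw [ae_iff]
      exact hconc
    rw [← lintegral_indicator hA (W n)]
    refine lintegral_congr_ae ?_
    filter_upwards [hae] with x hx
    have : ∀ g : G, A.indicator (1 : Z → ENNReal) (r (g • x)) * (B n).indicator 1 (g • x)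
        = A.indicator (1 : Z → ENNReal) x * (B n).indicator 1 (g • x) := by
      intro g; rw [hr_fix x hx g]
    simp only [this]
    rw [lintegral_const_mul' _ _ (by
      by_cases hxA : x ∈ A <;> simp [Set.indicator_apply, hxA] : A.indicator (1 : Z → ENNReal) x ≠ ⊤)]
    by_cases hxA : x ∈ A <;> simp [Set.indicator_apply, hxA, hW_def]
  -- set integrals of W n agree for ν and ν'
  have hWeq : ∀ (n : ℕ) (A : Set Z), MeasurableSet A →
      ∫⁻ x in A, W n x ∂ν = ∫⁻ x in A, W n x ∂ν' := by
    intro n A hA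
    rw [key ν hν_conc hν_disint n A hA, key ν' hν'_conc hν'_disint n A hA]
  -- finiteness
  have hfin : ∀ (ν₂ : Measure Z),
      (∀ f : Z → ENNReal, Measurable f →
        ∫⁻ z, f z ∂m = ∫⁻ x, ∫⁻ g, f (g • x) ∂lam ∂ν₂) →
      ∀ n : ℕ, ∫⁻ x, W n x ∂ν₂ < ⊤ := by
    intro ν₂ hdis n
    have := hdis ((B n).indicator 1) (measurable_one.indicator (hB_meas n))
    rw [← this, lintegral_indicator (hB_meas n)]
    simpa using hB_fin n
  have haeW : ∀ (ν₂ : Measure Z),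
      (∀ f : Z → ENNReal, Measurable f →
        ∫⁻ z, f z ∂m = ∫⁻ x, ∫⁻ g, f (g • x) ∂lam ∂ν₂) →
      ∀ᵐ x ∂ν₂, ∀ n, W n x < ⊤ := by
    intro ν₂ hdis
    rw [ae_all_iff]
    exact fun n => ae_lt_top (hW_meas n) (hfin ν₂ hdis n).ne
  -- positivity
  have hpos : ∀ x ∈ Xh, ∃ n, 0 < W n x := by
    intro x hx
    obtain ⟨n, hxn⟩ : ∃ n, x ∈ E n := by
      simpa using hEcover hx
    refine ⟨n, ?_⟩
    have hsmul_meas : Measurable fun g : G => g • x :=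
      hact.comp (measurable_id.prodMk measurable_const)
    have hWn : W n x = lam ((fun g : G => g • x) ⁻¹' B n) := by
      rw [hW_def]
      rw [← lintegral_indicator_one (hsmul_meas (hB_meas n))]
      refine lintegral_congr fun g => ?_
      by_cases hg : g • x ∈ B n <;> simp [Set.indicator_apply, hg]
    have hVsub : V ⊆ (fun g : G => g • x) ⁻¹' B n := by
      intro g hg
      exact hVB n (Set.smul_mem_smul hg hxn)
    calc (0 : ENNReal) < lam V := lam.measure_pos_of_mem_nhds hV_nhd
      _ ≤ lam ((fun g : G => g • x) ⁻¹' B n) := measure_mono hVsub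
      _ = W n x := hWn.symm
  -- the good sets
  set S : ℕ → Set Z := fun n => Xh ∩ (W n ⁻¹' Set.Ioo 0 ⊤) with hS_def
  have hS_meas : ∀ n, MeasurableSet (S n) :=
    fun n => hXh.inter ((hW_meas n) measurableSet_Ioo)
  -- equality on subsets of S n
  have hSeq : ∀ (n : ℕ) (A : Set Z), MeasurableSet A → A ⊆ S n → ν A = ν' A := by
    intro n A hA hAS
    have hwd : ν.withDensity (W n) = ν'.withDensity (W n) := by
      refine Measure.ext fun s hs => ?_
      rw [withDensity_apply _ hs, withDensity_apply _ hs, hWeq n s hs]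
    have hcalc : ∀ μ : Measure Z, μ A = ∫⁻ x in A, (W n x)⁻¹ ∂μ.withDensity (W n) := by
      intro μ
      rw [setLIntegral_withDensity_eq_setLIntegral_mul μ (g := fun x => (W n x)⁻¹) (hW_meas n) (hW_meas n).inv hA]
      rw [← setLIntegral_one A]
      refine setLIntegral_congr_fun hA ?_
      intro x hxA
      obtain ⟨-, hx1, hx2⟩ := hAS hxA
      exact (ENNReal.mul_inv_cancel hx1.ne' hx2.ne).symm
    rw [hcalc ν, hcalc ν', hwd]
  -- the bad set is null
  have hnull : ∀ (ν₂ : Measure Z), (∀ᵐ x ∂ν₂, ∀ n, W n x < ⊤) →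
      ν₂ (Xh \ ⋃ n, S n) = 0 := by
    intro ν₂ hae
    have hsub : Xh \ ⋃ n, S n ⊆ {x | ¬ ∀ n, W n x < ⊤} := by
      rintro x ⟨hx, hxS⟩
      obtain ⟨n, hn⟩ := hpos x hx
      intro hall
      exact hxS (Set.mem_iUnion.2 ⟨n, hx, hn, hall n⟩)
    refine measure_mono_null hsub ?_
    rw [← ae_iff] at *
    exact hae
  -- decomposition
  ext A hA
  have hdecomp : ∀ μ : Measure Z, μ Xhᶜ = 0 → μ (Xh \ ⋃ n, S n) = 0 →
      μ A = ∑' n, μ (A ∩ disjointed S n) := by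
    intro μ h1 h2
    have hAU : μ A = μ (A ∩ ⋃ n, disjointed S n) := by
      rw [iUnion_disjointed]
      refine le_antisymm ?_ (measure_mono Set.inter_subset_left)
      calc μ A ≤ μ (A ∩ ⋃ n, S n) + μ (A \ ⋃ n, S n) := measure_le_inter_add_diff μ A _
        _ = μ (A ∩ ⋃ n, S n) := by
            have : A \ ⋃ n, S n ⊆ Xhᶜ ∪ (Xh \ ⋃ n, S n) := by
              rintro x ⟨hxA, hxS⟩
              by_cases hx : x ∈ Xh
              · exact Or.inr ⟨hx, hxS⟩
              · exact Or.inl hx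
            rw [measure_mono_null this (measure_union_null h1 h2), add_zero]
    rw [hAU, Set.inter_iUnion]
    exact measure_iUnion
      (fun i j hij => ((disjoint_disjointed S hij).mono
        Set.inter_subset_right Set.inter_subset_right))
      (fun n => hA.inter (MeasurableSet.disjointed hS_meas n))
  rw [hdecomp ν' hν'_conc (hnull ν' (haeW ν' hν'_disint)),
      hdecomp ν hν_conc (hnull ν (haeW ν hν_disint))]
  refine tsum_congr fun n => ?_
  exact (hSeq n (A ∩ disjointed S n)
    (hA.inter (MeasurableSet.disjointed hS_meas n))
    ((Set.inter_subset_right).trans (disjointed_subset S n))).symm
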